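/- If a collection of point-to-point FTRs and flowgate rights (T, F) is simultaneously feasible (i.e., there exist storage injections q with t(k) + q(k) ∈ P(c − f(k)) for all k and q_i ∈ U(b_i) for all i), then its rent Φ(T,F) = ∑_{i,j} (λ_j − λ_i)ᵀ t_{ij} + ∑_ℓ μ_ℓᵀ f_ℓ is at most the transmission congestion surplus TCS derived at the efficient market equilibrium. -/

import Mathlib

/-- `L` is the lower-triangular matrix with entries `-1` on and below the diagonal. -/
def storageMatrix (N : ℕ) : Matrix (Fin N) (Fin N) ℝ :=
  Matrix.of fun k ℓ => if ℓ ≤ k then -1 else 0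

/-- If all partial sums (over initial segments) of `g` vanish, then `g` vanishes. -/
lemma partial_sums_zero {N : ℕ} (g : Fin N → ℝ)
    (h : ∀ k, ∑ ℓ ∈ Finset.univ.filter (· ≤ k), g ℓ = 0) : ∀ k, g k = 0 := by
  have key : ∀ M (k : Fin N), k.val < M → g k = 0 := by
    intro M
    induction M with
    | zero => intro k hk; omega
    | succ M ih =>
      intro k hk
      have hsplit : Finset.univ.filter (· ≤ k) =
          insert k (Finset.univ.filter (· < k)) := by
        ext ℓ
        simp [le_iff_lt_or_eq, or_comm]
      have hsum := h k
      rw [hsplit, Finset.sum_insert (by simp)] at hsum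
      have h2 : ∑ ℓ ∈ Finset.univ.filter (· < k), g ℓ = 0 := by
        refine Finset.sum_eq_zero fun ℓ hℓ => ?_
        have hℓk : ℓ < k := (Finset.mem_filter.mp hℓ).2
        exact ih ℓ (by omega)
      linarith
  intro k
  exact key (k.val + 1) k (by omega)

/-- Revenue adequacy of transmission rights: if the collection `(T, F)` of
point-to-point FTRs `t i j` and flowgate rights `f ℓ` is simultaneously feasible
(with a storage certificate `q`), then its rent
`Φ(T,F) = ∑ᵢⱼ (λⱼ-λᵢ)ᵀ tᵢⱼ + ∑ₗ μₗᵀ fₗ` is at most the transmission congestion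
surplus `TCS = -∑ₖ λ(k)ᵀ(v(k)+u(k))`. -/
theorem ftr_revenue_adequacy
    (n m N : ℕ) (H : Matrix (Fin (2 * m)) (Fin n) ℝ) (c : Fin (2 * m) → ℝ)
    (hc : ∀ ℓ, 0 ≤ c ℓ) (b : Fin n → ℝ) (hb : ∀ i, 0 ≤ b i)
    -- the efficient market equilibrium and its KKT multipliers
    (v u : Fin N → Fin n → ℝ) (γ : Fin N → ℝ) (μ : Fin N → Fin (2 * m) → ℝ)
    (lam : Fin N → Fin n → ℝ) (νbar νlow : Fin n → Fin N → ℝ)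
    (hμ : ∀ k ℓ, 0 ≤ μ k ℓ)
    (hνbar : ∀ i k, 0 ≤ νbar i k) (hνlow : ∀ i k, 0 ≤ νlow i k)
    (hlam : ∀ k i, lam k i = γ k - H.transpose.mulVec (μ k) i)
    (hflow : ∀ k, H.mulVec (fun i => v k i + u k i) ≤ c)
    (hbal : ∀ k, ∑ i, (v k i + u k i) = 0)
    (hcs_line : ∀ k ℓ, μ k ℓ * (H.mulVec (fun i => v k i + u k i) ℓ - c ℓ) = 0)
    (hstat : ∀ i, (storageMatrix N).transpose.mulVec (fun k => νbar i k - νlow i k)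
        = fun k => lam k i)
    (hstg : ∀ i k, 0 ≤ (storageMatrix N).mulVec (fun k => u k i) k ∧
        (storageMatrix N).mulVec (fun k => u k i) k ≤ b i)
    (hcs_low : ∀ i k, νlow i k * (storageMatrix N).mulVec (fun k => u k i) k = 0)
    (hcs_up : ∀ i k, νbar i k * (b i - (storageMatrix N).mulVec (fun k => u k i) k) = 0)
    -- the collection of transmission rights
    (t : Fin n → Fin n → Fin N → ℝ) (ht : ∀ i j k, 0 ≤ t i j k)
    (f : Fin (2 * m) → Fin N → ℝ) (hf : ∀ ℓ k, 0 ≤ f ℓ k)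
    -- simultaneous feasibility: a storage certificate q exists
    (hSF : ∃ q : Fin N → Fin n → ℝ,
      (∀ k, H.mulVec (fun i => (∑ j, (t i j k - t j i k)) + q k i) ≤
          fun ℓ => c ℓ - f ℓ k) ∧
      (∀ k, ∑ i, ((∑ j, (t i j k - t j i k)) + q k i) = 0) ∧
      (∀ i k, 0 ≤ (storageMatrix N).mulVec (fun k => q k i) k ∧
          (storageMatrix N).mulVec (fun k => q k i) k ≤ b i)) :
    (∑ i, ∑ j, ∑ k, (lam k j - lam k i) * t i j k) +
        (∑ ℓ, ∑ k, μ k ℓ * f ℓ k) ≤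
      -(∑ k, ∑ i, lam k i * (v k i + u k i)) := by
  obtain ⟨q, hq1, hq2, hq3⟩ := hSF
  -- the net FTR injections sum to zero at each period
  have htnet0 : ∀ k, ∑ i, (∑ j, (t i j k - t j i k)) = 0 := by
    intro k
    have hcomm : ∑ i, ∑ j, t j i k = ∑ i, ∑ j, t i j k := Finset.sum_comm
    simp only [Finset.sum_sub_distrib]
    rw [hcomm]
    ring
  -- hence the storage certificate injections also sum to zero at each period
  have hqsum : ∀ k, ∑ i, q k i = 0 := by
    intro k
    have h2 := hq2 k
    rw [Finset.sum_add_distrib, htnet0 k] at h2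
    linarith
  -- the storage state of charge of the certificate, explicitly
  have hLq : ∀ i k, (storageMatrix N).mulVec (fun k' => q k' i) k
      = -∑ ℓ ∈ Finset.univ.filter (· ≤ k), q ℓ i := by
    intro i k
    simp only [storageMatrix, Matrix.mulVec, dotProduct, Matrix.of_apply]
    calc ∑ ℓ, (if ℓ ≤ k then (-1:ℝ) else 0) * q ℓ i
        = ∑ ℓ, (if ℓ ≤ k then -q ℓ i else 0) := by
          refine Finset.sum_congr rfl fun ℓ _ => ?_
          split <;> ring
      _ = ∑ ℓ ∈ Finset.univ.filter (· ≤ k), -q ℓ i := (Finset.sum_filter _ _).symm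
      _ = -∑ ℓ ∈ Finset.univ.filter (· ≤ k), q ℓ i := Finset.sum_neg_distrib _
  -- the certificate is identically zero
  have hq0 : ∀ k i, q k i = 0 := by
    have hS : ∀ i k, ∑ ℓ ∈ Finset.univ.filter (· ≤ k), q ℓ i = 0 := by
      intro i k
      have hnonneg : ∀ i' : Fin n, i' ∈ Finset.univ →
          0 ≤ -∑ ℓ ∈ Finset.univ.filter (· ≤ k), q ℓ i' := by
        intro i' _
        have := (hq3 i' k).1
        rwa [hLq i' k] at this
      have hsum0 : ∑ i' : Fin n, (-∑ ℓ ∈ Finset.univ.filter (· ≤ k), q ℓ i') = 0 := by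
        rw [Finset.sum_neg_distrib, Finset.sum_comm]
        rw [Finset.sum_eq_zero fun ℓ _ => hqsum ℓ]
        ring
      have := (Finset.sum_eq_zero_iff_of_nonneg hnonneg).mp
        hsum0 i (Finset.mem_univ i)
      linarith
    intro k i
    exact partial_sums_zero (fun ℓ => q ℓ i) (hS i) k
  -- the feasibility condition, with the certificate removed
  have hfeas : ∀ k ℓ, H.mulVec (fun i => ∑ j, (t i j k - t j i k)) ℓ ≤ c ℓ - f ℓ k := by
    intro k ℓ
    have h1 := hq1 k ℓ
    simpa [hq0] using h1
  -- a little helper: the pricing identity against any balanced injection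
  have hlsum : ∀ (k : Fin N) (x : Fin n → ℝ), (∑ i, x i = 0) →
      -∑ i, lam k i * x i = ∑ ℓ, μ k ℓ * H.mulVec x ℓ := by
    intro k x hx
    have hexp : ∑ i, lam k i * x i
        = γ k * ∑ i, x i - ∑ i, (∑ ℓ, H ℓ i * μ k ℓ) * x i := by
      simp only [hlam, Matrix.mulVec, dotProduct, Matrix.transpose_apply]
      rw [Finset.mul_sum, ← Finset.sum_sub_distrib]
      refine Finset.sum_congr rfl fun i _ => ?_
      ring
    rw [hexp, hx, mul_zero, zero_sub, neg_neg]
    simp only [Matrix.mulVec, dotProduct, Finset.mul_sum, Finset.sum_mul]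
    rw [Finset.sum_comm]
    refine Finset.sum_congr rfl fun i _ => Finset.sum_congr rfl fun ℓ _ => by ring
  -- rewrite the FTR rent in terms of the line multipliers
  have hrent : (∑ i, ∑ j, ∑ k, (lam k j - lam k i) * t i j k)
      = ∑ k, ∑ ℓ, μ k ℓ * H.mulVec (fun i => ∑ j, (t i j k - t j i k)) ℓ := by
    have step1 : (∑ i, ∑ j, ∑ k, (lam k j - lam k i) * t i j k)
        = ∑ k, (-∑ i, lam k i * (∑ j, (t i j k - t j i k))) := by
      calc ∑ i, ∑ j, ∑ k, (lam k j - lam k i) * t i j k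
          = ∑ i, ∑ k, ∑ j, (lam k j - lam k i) * t i j k :=
            Finset.sum_congr rfl fun i _ => Finset.sum_comm
        _ = ∑ k, ∑ i, ∑ j, (lam k j - lam k i) * t i j k := Finset.sum_comm
        _ = ∑ k, (-∑ i, lam k i * (∑ j, (t i j k - t j i k))) := by
            refine Finset.sum_congr rfl fun k _ => ?_
            have hswap : ∑ i', ∑ j', lam k j' * t i' j' k
                = ∑ i', ∑ j', lam k i' * t j' i' k := Finset.sum_comm
            simp only [sub_mul, Finset.sum_sub_distrib, Finset.mul_sum, mul_sub, neg_sub]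
            rw [hswap]
    rw [step1]
    exact Finset.sum_congr rfl fun k _ => hlsum k _ (htnet0 k)
  -- rewrite the TCS in terms of the line multipliers and capacities
  have htcs : -(∑ k, ∑ i, lam k i * (v k i + u k i)) = ∑ k, ∑ ℓ, μ k ℓ * c ℓ := by
    rw [← Finset.sum_neg_distrib]
    refine Finset.sum_congr rfl fun k _ => ?_
    rw [hlsum k (fun i => v k i + u k i) (hbal k)]
    refine Finset.sum_congr rfl fun ℓ _ => ?_
    have := hcs_line k ℓ
    nlinarith [this]
  rw [hrent, htcs]
  have hswapf : (∑ ℓ, ∑ k, μ k ℓ * f ℓ k) = ∑ k, ∑ ℓ, μ k ℓ * f ℓ k :=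
    Finset.sum_comm
  rw [hswapf, ← Finset.sum_add_distrib]
  refine Finset.sum_le_sum fun k _ => ?_
  rw [← Finset.sum_add_distrib]
  refine Finset.sum_le_sum fun ℓ _ => ?_
  have h1 := hfeas k ℓ
  have h2 := hμ k ℓ
  nlinarith [h1, h2]
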